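/- Let X be a set, I a nonempty finite set, and (f_i)_{i∈I} a family of functions f_i : X → X having attractor A. Then there exist a metric d on A and a comparison function φ : [0,∞) → [0,∞) such that f_i maps A into A and d(f_i(x), f_i(y)) ≤ φ(d(x,y)) for every i ∈ I and every x,y ∈ A. -/

import Mathlib

open Filter Topology Set

/-- `φ : [0,∞) → [0,∞)` is a comparison function: it maps `[0,∞)` into `[0,∞)`,
is increasing, satisfies `φ t < t` for `t > 0`, and is right-continuous. -/
def IsComparisonFn (φ : ℝ → ℝ) : Prop :=
  (∀ t : ℝ, 0 ≤ t → 0 ≤ φ t) ∧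
  MonotoneOn φ (Set.Ici (0 : ℝ)) ∧
  (∀ t : ℝ, 0 < t → φ t < t) ∧
  (∀ t : ℝ, 0 ≤ t → ContinuousWithinAt φ (Set.Ici t) t)

/-- `f_{α₁…αₙ} = f_{α₁} ∘ f_{α₂} ∘ … ∘ f_{αₙ}` (the identity for the empty word). -/
def WordMap {X I : Type*} (f : I → X → X) : List I → X → X
  | [] => id
  | i :: w => f i ∘ WordMap f w

/-- `[α]_n`: the finite word consisting of the first `n` letters of the infinite word `α`. -/
def Pref {I : Type*} (α : ℕ → I) (n : ℕ) : List I := List.ofFn (fun k : Fin n => α (k : ℕ))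

/-- `X_w = f_w(X)`, the image of the whole space under the word map. -/
def WordSet {X I : Type*} (f : I → X → X) (w : List I) : Set X := Set.range (WordMap f w)

/-- A family `(f_i)_{i ∈ I}` of self-maps of `X` has attractor if:
(a) for every infinite word `α`, `⋂ₙ X_{[α]ₙ}` has a unique element `a_α`;
(b) whenever `a_α ≠ a_β`, some `X_{[α]_{n₀}}` and `X_{[β]_{n₀}}` are disjoint. -/
def HasAttractor {X I : Type*} (f : I → X → X) : Prop :=
  (∀ α : ℕ → I, ∃! a : X, ∀ n : ℕ, a ∈ WordSet f (Pref α n)) ∧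
  (∀ α β : ℕ → I, ∀ a b : X,
    (∀ n : ℕ, a ∈ WordSet f (Pref α n)) → (∀ n : ℕ, b ∈ WordSet f (Pref β n)) →
    a ≠ b →
    ∃ n₀ : ℕ, WordSet f (Pref α n₀) ∩ WordSet f (Pref β n₀) = ∅)

/-- The attractor `A = {a_α : α ∈ Λ(I)}` of a family of functions having attractor. -/
def AttractorSet {X I : Type*} (f : I → X → X) : Set X :=
  {x | ∃ α : ℕ → I, ∀ n : ℕ, x ∈ WordSet f (Pref α n)}

namespace MOAux

variable {X I : Type*}

lemma wordMap_append (f : I → X → X) (u v : List I) :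
    WordMap f (u ++ v) = WordMap f u ∘ WordMap f v := by
  induction u with
  | nil => rfl
  | cons i u ih =>
    show f i ∘ WordMap f (u ++ v) = (f i ∘ WordMap f u) ∘ WordMap f v
    rw [ih, Function.comp_assoc]

lemma wordSet_append_subset (f : I → X → X) (u v : List I) :
    WordSet f (u ++ v) ⊆ WordSet f u := by
  rintro x ⟨p, rfl⟩
  exact ⟨WordMap f v p, by rw [wordMap_append]; rfl⟩

lemma pref_zero (α : ℕ → I) : Pref α 0 = [] := rfl

lemma pref_succ_concat (α : ℕ → I) (n : ℕ) : Pref α (n + 1) = Pref α n ++ [α n] := by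
  rw [Pref, List.ofFn_succ', List.concat_eq_append]
  rfl

lemma wordSet_pref_anti (f : I → X → X) (α : ℕ → I) {m n : ℕ} (h : m ≤ n) :
    WordSet f (Pref α n) ⊆ WordSet f (Pref α m) := by
  induction h with
  | refl => exact subset_rfl
  | step h ih =>
    refine subset_trans ?_ ih
    rw [pref_succ_concat]
    exact wordSet_append_subset f _ _

/-- `α` is an address of `x`. -/
def IsAddr (f : I → X → X) (α : ℕ → I) (x : X) : Prop := ∀ n, x ∈ WordSet f (Pref α n)

lemma mem_attractor_iff {f : I → X → X} {x : X} :
    x ∈ AttractorSet f ↔ ∃ α, IsAddr f α x := Iff.rfl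

/-- prepend a letter to an infinite word -/
def consW (i : I) (α : ℕ → I) : ℕ → I := fun n => Nat.rec i (fun m _ => α m) n

lemma pref_consW (i : I) (α : ℕ → I) (n : ℕ) :
    Pref (consW i α) (n + 1) = i :: Pref α n := by
  rw [Pref, List.ofFn_succ]
  rfl

lemma mem_wordSet_cons (f : I → X → X) {x : X} {w : List I} (h : x ∈ WordSet f w) (i : I) :
    f i x ∈ WordSet f (i :: w) := by
  obtain ⟨p, rfl⟩ := h
  exact ⟨p, rfl⟩

lemma isAddr_consW (f : I → X → X) {α : ℕ → I} {x : X} (h : IsAddr f α x) (i : I) :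
    IsAddr f (consW i α) (f i x) := by
  intro n
  cases n with
  | zero => exact ⟨f i x, rfl⟩
  | succ n => rw [pref_consW]; exact mem_wordSet_cons f (h n) i

/-- prepend a finite word to an infinite word -/
def wcons : List I → (ℕ → I) → (ℕ → I)
  | [], α => α
  | i :: w, α => consW i (wcons w α)

lemma isAddr_wcons (f : I → X → X) {α : ℕ → I} {x : X} (h : IsAddr f α x) (w : List I) :
    IsAddr f (wcons w α) (WordMap f w x) := by
  induction w with
  | nil => exact h
  | cons i w ih => exact isAddr_consW f ih i

lemma wcons_eval_lt (w : List I) (α β : ℕ → I) {k : ℕ} (h : k < w.length) :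
    wcons w α k = wcons w β k := by
  induction w generalizing k with
  | nil => simp at h
  | cons i w ih =>
    cases k with
    | zero => rfl
    | succ k =>
      show wcons w α k = wcons w β k
      exact ih (by simpa using h)

lemma pref_eq_of_eval_eq (α β : ℕ → I) (n : ℕ) (h : ∀ k < n, α k = β k) :
    Pref α n = Pref β n :=
  congrArg List.ofFn (funext fun k => h k k.2)

lemma pref_wcons_eq (w : List I) (α β : ℕ → I) {m : ℕ} (h : m ≤ w.length) :
    Pref (wcons w α) m = Pref (wcons w β) m :=
  pref_eq_of_eval_eq _ _ _ fun k hk => wcons_eval_lt w α β (lt_of_lt_of_le hk h)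

/-- cylinders of `α` and `β` meet at level `n`. -/
def Meet (f : I → X → X) (α β : ℕ → I) (n : ℕ) : Prop :=
  (WordSet f (Pref α n) ∩ WordSet f (Pref β n)).Nonempty

lemma meet_anti (f : I → X → X) {α β : ℕ → I} {m n : ℕ} (h : m ≤ n) :
    Meet f α β n → Meet f α β m := by
  rintro ⟨p, h1, h2⟩
  exact ⟨p, wordSet_pref_anti f α h h1, wordSet_pref_anti f β h h2⟩

lemma meet_symm {f : I → X → X} {α β : ℕ → I} {n : ℕ} (h : Meet f α β n) : Meet f β α n := by
  obtain ⟨p, h1, h2⟩ := h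
  exact ⟨p, h2, h1⟩

/-- the separation entourages -/
def URel (f : I → X → X) (m : ℕ) : Set (X × X) :=
  {p | ∃ α β, IsAddr f α p.1 ∧ IsAddr f β p.2 ∧ Meet f α β m}

lemma uRel_anti (f : I → X → X) {m n : ℕ} (h : m ≤ n) : URel f n ⊆ URel f m := by
  rintro ⟨x, y⟩ ⟨α, β, hα, hβ, hm⟩
  exact ⟨α, β, hα, hβ, meet_anti f h hm⟩

lemma uRel_symm {f : I → X → X} {m : ℕ} {x y : X} (h : (x, y) ∈ URel f m) :
    (y, x) ∈ URel f m := by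
  obtain ⟨α, β, hα, hβ, hm⟩ := h
  exact ⟨β, α, hβ, hα, meet_symm hm⟩

lemma uRel_left_mem {f : I → X → X} {m : ℕ} {x y : X} (h : (x, y) ∈ URel f m) :
    x ∈ AttractorSet f := by
  obtain ⟨α, _, hα, _, _⟩ := h
  exact ⟨α, hα⟩

lemma uRel_right_mem {f : I → X → X} {m : ℕ} {x y : X} (h : (x, y) ∈ URel f m) :
    y ∈ AttractorSet f := uRel_left_mem (uRel_symm h)

lemma uRel_diag {f : I → X → X} {x : X} (h : x ∈ AttractorSet f) (m : ℕ) :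
    (x, x) ∈ URel f m := by
  obtain ⟨α, hα⟩ := h
  exact ⟨α, α, hα, hα, ⟨x, hα m, hα m⟩⟩

lemma uRel_word (f : I → X → X) {x y : X} (hx : x ∈ AttractorSet f) (hy : y ∈ AttractorSet f)
    (w : List I) {m : ℕ} (hm : m ≤ w.length) :
    (WordMap f w x, WordMap f w y) ∈ URel f m := by
  obtain ⟨α, hα⟩ := hx
  obtain ⟨β, hβ⟩ := hy
  refine ⟨wcons w α, wcons w β, isAddr_wcons f hα w, isAddr_wcons f hβ w, ?_⟩
  refine ⟨WordMap f w x, isAddr_wcons f hα w m, ?_⟩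
  rw [pref_wcons_eq w β α hm]
  exact isAddr_wcons f hα w m

lemma mapsTo_attractor (f : I → X → X) (i : I) :
    Set.MapsTo (f i) (AttractorSet f) (AttractorSet f) := by
  rintro x ⟨α, hα⟩
  exact ⟨consW i α, isAddr_consW f hα i⟩

end MOAux

namespace MOAux

variable {X I : Type*}

lemma eq_of_meet_all {f : I → X → X} (hF : HasAttractor f) {α β : ℕ → I} {x y : X}
    (hα : IsAddr f α x) (hβ : IsAddr f β y) (h : ∀ n, Meet f α β n) : x = y := by
  by_contra hne
  obtain ⟨n₀, hdis⟩ := hF.2 α β x y hα hβ hne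
  exact (h n₀).ne_empty hdis

/-- the canonical point of an infinite word -/
noncomputable def ptOf {f : I → X → X} (hF : HasAttractor f) (α : ℕ → I) : X :=
  (hF.1 α).exists.choose

lemma isAddr_ptOf {f : I → X → X} (hF : HasAttractor f) (α : ℕ → I) :
    IsAddr f α (ptOf hF α) := (hF.1 α).exists.choose_spec

section Compact

variable [Finite I]

lemma claimA {f : I → X → X} (hF : HasAttractor f) {x y : X}
    (h : ∀ n, (x, y) ∈ URel f n) : x = y := by
  letI : TopologicalSpace I := ⊥
  haveI : DiscreteTopology I := ⟨rfl⟩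
  letI : TopologicalSpace (List I) := ⊥
  haveI : DiscreteTopology (List I) := ⟨rfl⟩
  have hcont : ∀ n : ℕ, Continuous fun α : ℕ → I => Pref α n := by
    intro n
    have h1 : Continuous fun α : ℕ → I => (fun k : Fin n => α (k : ℕ)) :=
      continuous_pi fun k => continuous_apply _
    exact (continuous_of_discreteTopology (f := fun g : Fin n → I => List.ofFn g)).comp h1
  set K : ℕ → Set ((ℕ → I) × (ℕ → I)) :=
    fun n => {q | IsAddr f q.1 x ∧ IsAddr f q.2 y ∧ Meet f q.1 q.2 n} with hK
  have c1 : IsClosed {q : (ℕ → I) × (ℕ → I) | IsAddr f q.1 x} := by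
    have he : {q : (ℕ → I) × (ℕ → I) | IsAddr f q.1 x} =
        ⋂ m, (fun q : (ℕ → I) × (ℕ → I) => Pref q.1 m) ⁻¹' {w | x ∈ WordSet f w} := by
      ext q; simp [IsAddr]
    rw [he]
    exact isClosed_iInter fun m =>
      (isClosed_discrete _).preimage ((hcont m).comp continuous_fst)
  have c2 : IsClosed {q : (ℕ → I) × (ℕ → I) | IsAddr f q.2 y} := by
    have he : {q : (ℕ → I) × (ℕ → I) | IsAddr f q.2 y} =
        ⋂ m, (fun q : (ℕ → I) × (ℕ → I) => Pref q.2 m) ⁻¹' {w | y ∈ WordSet f w} := by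
      ext q; simp [IsAddr]
    rw [he]
    exact isClosed_iInter fun m =>
      (isClosed_discrete _).preimage ((hcont m).comp continuous_snd)
  have c3 : ∀ n, IsClosed {q : (ℕ → I) × (ℕ → I) | Meet f q.1 q.2 n} := by
    intro n
    have he : {q : (ℕ → I) × (ℕ → I) | Meet f q.1 q.2 n} =
        (fun q : (ℕ → I) × (ℕ → I) => (Pref q.1 n, Pref q.2 n)) ⁻¹'
          {v : List I × List I | (WordSet f v.1 ∩ WordSet f v.2).Nonempty} := by
      ext q; rfl
    rw [he]
    exact (isClosed_discrete _).preimage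
      (((hcont n).comp continuous_fst).prodMk ((hcont n).comp continuous_snd))
  have hclosed : ∀ n, IsClosed (K n) := fun n => c1.inter (c2.inter (c3 n))
  have hnested : ∀ n, K (n + 1) ⊆ K n := by
    rintro n ⟨α, β⟩ ⟨h1, h2, h3⟩
    exact ⟨h1, h2, meet_anti f (Nat.le_succ n) h3⟩
  have hnonempty : ∀ n, (K n).Nonempty := by
    intro n
    obtain ⟨α, β, hα, hβ, hm⟩ := h n
    exact ⟨(α, β), hα, hβ, hm⟩
  have hcompact : IsCompact (K 0) := (hclosed 0).isCompact
  obtain ⟨⟨α, β⟩, hq⟩ :=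
    IsCompact.nonempty_iInter_of_sequence_nonempty_isCompact_isClosed K hnested hnonempty
      hcompact hclosed
  have hq' : ∀ n, (α, β) ∈ K n := by
    intro n; exact mem_iInter.1 hq n
  exact eq_of_meet_all hF (hq' 0).1 (hq' 0).2.1 fun n => (hq' n).2.2

lemma claimB {f : I → X → X} (hF : HasAttractor f) (n : ℕ) :
    ∃ m, n < m ∧ ∀ x y z : X, (x, y) ∈ URel f m → (y, z) ∈ URel f m → (x, z) ∈ URel f n := by
  by_contra hcon
  push_neg at hcon
  have hcon' : ∀ m, ∃ x y z : X,
      (x, y) ∈ URel f (m + n + 1) ∧ (y, z) ∈ URel f (m + n + 1) ∧ (x, z) ∉ URel f n := by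
    intro m
    exact hcon (m + n + 1) (by omega)
  letI : TopologicalSpace I := ⊥
  haveI : DiscreteTopology I := ⟨rfl⟩
  letI : TopologicalSpace (List I) := ⊥
  haveI : DiscreteTopology (List I) := ⟨rfl⟩
  have hcont : ∀ k : ℕ, Continuous fun α : ℕ → I => Pref α k := by
    intro k
    have h1 : Continuous fun α : ℕ → I => (fun j : Fin k => α (j : ℕ)) :=
      continuous_pi fun j => continuous_apply _
    exact (continuous_of_discreteTopology (f := fun g : Fin k → I => List.ofFn g)).comp h1
  set Λ := (ℕ → I)
  have cMeet : ∀ (k : ℕ) (F G : Λ × Λ × Λ × Λ → Λ), Continuous F → Continuous G →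
      IsClosed {q : Λ × Λ × Λ × Λ | Meet f (F q) (G q) k} := by
    intro k F G hFc hGc
    have he : {q : Λ × Λ × Λ × Λ | Meet f (F q) (G q) k} =
        (fun q : Λ × Λ × Λ × Λ => (Pref (F q) k, Pref (G q) k)) ⁻¹'
          {v : List I × List I | (WordSet f v.1 ∩ WordSet f v.2).Nonempty} := by
      ext q; rfl
    rw [he]
    exact (isClosed_discrete _).preimage
      (((hcont k).comp hFc).prodMk ((hcont k).comp hGc))
  have cOpenMeet : ∀ (k : ℕ) (F G : Λ × Λ × Λ × Λ → Λ), Continuous F → Continuous G →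
      IsClosed {q : Λ × Λ × Λ × Λ | ¬ Meet f (F q) (G q) k} := by
    intro k F G hFc hGc
    have he : {q : Λ × Λ × Λ × Λ | ¬ Meet f (F q) (G q) k} =
        (fun q : Λ × Λ × Λ × Λ => (Pref (F q) k, Pref (G q) k)) ⁻¹'
          {v : List I × List I | ¬ (WordSet f v.1 ∩ WordSet f v.2).Nonempty} := by
      ext q; rfl
    rw [he]
    exact (isClosed_discrete _).preimage
      (((hcont k).comp hFc).prodMk ((hcont k).comp hGc))
  have p1 : Continuous fun q : Λ × Λ × Λ × Λ => q.1 := continuous_fst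
  have p2 : Continuous fun q : Λ × Λ × Λ × Λ => q.2.1 := continuous_fst.comp continuous_snd
  have p3 : Continuous fun q : Λ × Λ × Λ × Λ => q.2.2.1 :=
    continuous_fst.comp (continuous_snd.comp continuous_snd)
  have p4 : Continuous fun q : Λ × Λ × Λ × Λ => q.2.2.2 :=
    continuous_snd.comp (continuous_snd.comp continuous_snd)
  set K : ℕ → Set (Λ × Λ × Λ × Λ) := fun m =>
    {q | Meet f q.1 q.2.1 m ∧ Meet f q.2.1 q.2.2.1 m ∧ Meet f q.2.2.1 q.2.2.2 m ∧
      ¬ Meet f q.1 q.2.2.2 n} with hK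
  have hclosed : ∀ m, IsClosed (K m) := fun m =>
    (cMeet m _ _ p1 p2).inter ((cMeet m _ _ p2 p3).inter
      ((cMeet m _ _ p3 p4).inter (cOpenMeet n _ _ p1 p4)))
  have hnested : ∀ m, K (m + 1) ⊆ K m := by
    rintro m q ⟨h1, h2, h3, h4⟩
    exact ⟨meet_anti f (Nat.le_succ m) h1, meet_anti f (Nat.le_succ m) h2,
      meet_anti f (Nat.le_succ m) h3, h4⟩
  have hnonempty : ∀ m, (K m).Nonempty := by
    intro m
    obtain ⟨x, y, z, hxy, hyz, hxz⟩ := hcon' m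
    obtain ⟨α, β, hα, hβ, hm1⟩ := hxy
    obtain ⟨β', γ, hβ', hγ, hm2⟩ := hyz
    refine ⟨(α, β, β', γ), meet_anti f (by omega) hm1, ⟨y, hβ m, hβ' m⟩,
      meet_anti f (by omega) hm2, ?_⟩
    intro hmeet
    exact hxz ⟨α, γ, hα, hγ, hmeet⟩
  obtain ⟨⟨α, β, β', γ⟩, hq⟩ :=
    IsCompact.nonempty_iInter_of_sequence_nonempty_isCompact_isClosed K hnested hnonempty
      (hclosed 0).isCompact hclosed
  have hq' : ∀ m, (α, β, β', γ) ∈ K m := fun m => mem_iInter.1 hq m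
  have e1 : ptOf hF α = ptOf hF β :=
    eq_of_meet_all hF (isAddr_ptOf hF α) (isAddr_ptOf hF β) fun m => (hq' m).1
  have e2 : ptOf hF β = ptOf hF β' :=
    eq_of_meet_all hF (isAddr_ptOf hF β) (isAddr_ptOf hF β') fun m => (hq' m).2.1
  have e3 : ptOf hF β' = ptOf hF γ :=
    eq_of_meet_all hF (isAddr_ptOf hF β') (isAddr_ptOf hF γ) fun m => (hq' m).2.2.1
  refine (hq' 0).2.2.2 ?_
  refine ⟨ptOf hF α, isAddr_ptOf hF α n, ?_⟩
  rw [e1, e2, e3]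
  exact isAddr_ptOf hF γ n

lemma claimB3 {f : I → X → X} (hF : HasAttractor f) (n : ℕ) :
    ∃ m, n < m ∧ ∀ x y z w : X, (x, y) ∈ URel f m → (y, z) ∈ URel f m →
      (z, w) ∈ URel f m → (x, w) ∈ URel f n := by
  obtain ⟨m1, hm1, h1⟩ := claimB hF n
  obtain ⟨m2, hm2, h2⟩ := claimB hF m1
  refine ⟨m2, lt_trans hm1 hm2, fun x y z w ha hb hc => ?_⟩
  exact h1 x z w (h2 x y z ha hb) (uRel_anti f hm2.le hc)

end Compact

end MOAux

namespace MOAux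

open NNReal

variable {X : Type*}

/-- quasi-distance from a decreasing family of entourages -/
noncomputable def rhoOf (V : ℕ → Set (X × X)) (x y : X) : ℝ≥0 :=
  haveI := Classical.propDecidable (x = y)
  if x = y then 0 else 2⁻¹ ^ sInf {k | (x, y) ∉ V k}

section Rho

variable (V : ℕ → Set (X × X))

lemma rhoOf_self (x : X) : rhoOf V x x = 0 := by
  unfold rhoOf
  split
  · rfl
  · simp_all

lemma rhoOf_le_one (x y : X) : rhoOf V x y ≤ 1 := by
  unfold rhoOf
  split
  · exact zero_le_one
  · exact pow_le_one₀ zero_le (by norm_num)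

lemma rhoOf_eq_zero_iff {x y : X} : rhoOf V x y = 0 ↔ x = y := by
  unfold rhoOf
  split
  · simp [*]
  · simp only [iff_false, *]
    exact pow_ne_zero _ (by norm_num)

variable {V}

lemma rhoOf_comm (hVsymm : ∀ k (a b : X), (a, b) ∈ V k → (b, a) ∈ V k) (x y : X) :
    rhoOf V x y = rhoOf V y x := by
  unfold rhoOf
  have hs : {k | (x, y) ∉ V k} = {k | (y, x) ∉ V k} := by
    ext k
    exact ⟨fun h h2 => h (hVsymm k y x h2), fun h h2 => h (hVsymm k x y h2)⟩
  rcases eq_or_ne x y with rfl | hne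
  · simp
  · rw [if_neg hne, if_neg (Ne.symm hne), hs]

lemma rhoOf_le_of_mem (hVanti : ∀ {j k : ℕ}, j ≤ k → V k ⊆ V j)
    (hVsep : ∀ x y : X, (∀ k, (x, y) ∈ V k) → x = y)
    {x y : X} {k : ℕ} (h : (x, y) ∈ V k) :
    rhoOf V x y ≤ 2⁻¹ ^ (k + 1) := by
  unfold rhoOf
  split
  · exact zero_le
  · rename_i hne
    have hSne : {j | (x, y) ∉ V j}.Nonempty := by
      by_contra hc
      rw [Set.not_nonempty_iff_eq_empty] at hc
      exact hne (hVsep x y fun j => by_contra fun hj => (Set.eq_empty_iff_forall_notMem.1 hc j) hj)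
    have hmem := Nat.sInf_mem hSne
    have : k + 1 ≤ sInf {j | (x, y) ∉ V j} := by
      by_contra hc
      push_neg at hc
      have hle : sInf {j | (x, y) ∉ V j} ≤ k := by omega
      exact hmem (hVanti hle h)
    exact pow_le_pow_right_of_le_one' (by norm_num) this

lemma mem_of_rhoOf_le (hVanti : ∀ {j k : ℕ}, j ≤ k → V k ⊆ V j)
    (hVsep : ∀ x y : X, (∀ k, (x, y) ∈ V k) → x = y)
    {x y : X} {k : ℕ} (hne : x ≠ y) (h : rhoOf V x y ≤ 2⁻¹ ^ (k + 1)) :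
    (x, y) ∈ V k := by
  rw [rhoOf, if_neg hne] at h
  have hk : k + 1 ≤ sInf {j | (x, y) ∉ V j} := by
    by_contra hc
    push_neg at hc
    have : (2 : ℝ≥0)⁻¹ ^ (k + 1) < 2⁻¹ ^ sInf {j | (x, y) ∉ V j} :=
      pow_lt_pow_right_of_lt_one₀ (by norm_num) (by rw [← NNReal.coe_lt_coe]; push_cast; norm_num) hc
    exact absurd h (not_le.2 (lt_of_lt_of_le this le_rfl))
  have := Nat.notMem_of_lt_sInf (lt_of_lt_of_le (Nat.lt_succ_self k) hk)
  simpa using this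

lemma rhoOf_eq_pow_or (x y : X) : rhoOf V x y = 0 ∨ ∃ N, rhoOf V x y = 2⁻¹ ^ N := by
  unfold rhoOf
  split
  · exact Or.inl rfl
  · exact Or.inr ⟨_, rfl⟩

lemma rhoOf_four (hVanti : ∀ {j k : ℕ}, j ≤ k → V k ⊆ V j)
    (hVsep : ∀ x y : X, (∀ k, (x, y) ∈ V k) → x = y)
    (hVcomp : ∀ (k : ℕ) (a b c d : X),
      (a, b) ∈ V (k + 1) → (b, c) ∈ V (k + 1) → (c, d) ∈ V (k + 1) → (a, d) ∈ V k)
    (hVdiagR : ∀ (a b : X) (k : ℕ), (a, b) ∈ V k → ∀ j, (b, b) ∈ V j)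
    (x₁ x₂ x₃ x₄ : X) :
    rhoOf V x₁ x₄ ≤ 2 * max (rhoOf V x₁ x₂) (max (rhoOf V x₂ x₃) (rhoOf V x₃ x₄)) := by
  set M := max (rhoOf V x₁ x₂) (max (rhoOf V x₂ x₃) (rhoOf V x₃ x₄)) with hM
  rcases eq_or_ne x₁ x₄ with rfl | h14
  · rw [rhoOf_self]; exact zero_le
  rcases le_or_gt 2⁻¹ M with hMbig | hMsmall
  · calc rhoOf V x₁ x₄ ≤ 1 := rhoOf_le_one V x₁ x₄
      _ = 2 * 2⁻¹ := by norm_num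
      _ ≤ 2 * M := mul_le_mul_right hMbig 2
  -- M < 2⁻¹
  have hle12 : rhoOf V x₁ x₂ ≤ M := le_max_left _ _
  have hle23 : rhoOf V x₂ x₃ ≤ M := le_trans (le_max_left _ _) (le_max_right _ _)
  have hle34 : rhoOf V x₃ x₄ ≤ M := le_trans (le_max_right _ _) (le_max_right _ _)
  have hMne : M ≠ 0 := by
    intro h0
    have e12 : x₁ = x₂ := (rhoOf_eq_zero_iff V).1 (le_antisymm (h0 ▸ hle12) zero_le)
    have e23 : x₂ = x₃ := (rhoOf_eq_zero_iff V).1 (le_antisymm (h0 ▸ hle23) zero_le)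
    have e34 : x₃ = x₄ := (rhoOf_eq_zero_iff V).1 (le_antisymm (h0 ▸ hle34) zero_le)
    exact h14 (e12.trans (e23.trans e34))
  have hattain : ∃ K : ℕ, M = 2⁻¹ ^ K := by
    have h3 : M = rhoOf V x₁ x₂ ∨ M = rhoOf V x₂ x₃ ∨ M = rhoOf V x₃ x₄ := by
      rcases max_cases (rhoOf V x₁ x₂) (max (rhoOf V x₂ x₃) (rhoOf V x₃ x₄)) with ⟨h, _⟩ | ⟨h, _⟩
      · exact Or.inl h
      · rcases max_cases (rhoOf V x₂ x₃) (rhoOf V x₃ x₄) with ⟨h', _⟩ | ⟨h', _⟩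
        · exact Or.inr (Or.inl (h.trans h'))
        · exact Or.inr (Or.inr (h.trans h'))
    rcases h3 with h | h | h <;>
    · rw [h] at hMne ⊢
      rcases rhoOf_eq_pow_or (V := V) _ _ with h0 | ⟨N, hN⟩
      · exact absurd h0 hMne
      · exact ⟨N, hN⟩
  obtain ⟨K, hK⟩ := hattain
  have hK2 : 2 ≤ K := by
    by_contra hc
    push_neg at hc
    have : (2 : ℝ≥0)⁻¹ ≤ M := by
      rw [hK]
      calc (2 : ℝ≥0)⁻¹ = 2⁻¹ ^ 1 := (pow_one _).symm
        _ ≤ 2⁻¹ ^ K := pow_le_pow_right_of_le_one' (by norm_num) (by omega)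
    exact absurd this (not_le.2 hMsmall)
  obtain ⟨k, rfl⟩ : ∃ k, K = k + 2 := ⟨K - 2, by omega⟩
  have h2M : 2 * M = 2⁻¹ ^ (k + 1) := by
    rw [hK, pow_succ, ← mul_assoc, mul_comm (2 : ℝ≥0) (2⁻¹ ^ (k + 1) : ℝ≥0), mul_assoc]
    norm_num
  have hMeq : M = 2⁻¹ ^ ((k + 1) + 1) := hK
  have hmem : ∀ a b : X, rhoOf V a b ≤ M → a = b ∨ (a, b) ∈ V (k + 1) := by
    intro a b hab
    rcases eq_or_ne a b with rfl | hne
    · exact Or.inl rfl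
    · exact Or.inr (mem_of_rhoOf_le hVanti hVsep hne (hab.trans_eq hMeq))
  have hstep1 : ∀ {a b : X}, (a, b) ∈ V (k + 1) → rhoOf V a b ≤ 2 * M := by
    intro a b h
    calc rhoOf V a b ≤ 2⁻¹ ^ ((k + 1) + 1) := rhoOf_le_of_mem hVanti hVsep h
      _ = M := hMeq.symm
      _ ≤ 2 * M := le_mul_of_one_le_left zero_le one_le_two
  have hstep0 : ∀ {a b : X}, (a, b) ∈ V k → rhoOf V a b ≤ 2 * M := by
    intro a b h
    rw [h2M]
    exact rhoOf_le_of_mem hVanti hVsep h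
  rcases hmem x₁ x₂ hle12 with h12 | h12 <;> rcases hmem x₂ x₃ hle23 with h23 | h23 <;>
    rcases hmem x₃ x₄ hle34 with h34 | h34
  · exact absurd (h12.trans (h23.trans h34)) h14
  · subst h12; subst h23; exact hstep1 h34
  · subst h12; subst h34; exact hstep1 h23
  · subst h12; exact hstep0 (hVcomp k _ _ _ _ h23 h34 (hVdiagR _ _ _ h34 _))
  · subst h23; subst h34; exact hstep1 h12
  · subst h23; exact hstep0 (hVcomp k _ _ _ _ h12 h34 (hVdiagR _ _ _ h34 _))
  · subst h34; exact hstep0 (hVcomp k _ _ _ _ h12 h23 (hVdiagR _ _ _ h23 _))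
  · exact hstep0 (hVcomp k x₁ x₂ x₃ x₄ h12 h23 h34)
end Rho

end MOAux

namespace MOAux

/-- the comparison function built from slope bounds `R` and tail bounds `E`. -/
noncomputable def phiOf (R E : ℕ → ℝ) : ℝ → ℝ := fun t => ⨅ J : ℕ, max (R J * t) (E J)

section Phi

variable {R E : ℕ → ℝ}

lemma phiOf_bddBelow (hE0 : ∀ J, 0 ≤ E J) (t : ℝ) :
    BddBelow (Set.range fun J => max (R J * t) (E J)) := by
  refine ⟨0, ?_⟩
  rintro v ⟨J, rfl⟩
  exact le_max_of_le_right (hE0 J)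

lemma phiOf_le (hE0 : ∀ J, 0 ≤ E J) (t : ℝ) (J : ℕ) :
    phiOf R E t ≤ max (R J * t) (E J) := ciInf_le (phiOf_bddBelow hE0 t) J

lemma phiOf_nonneg (hE0 : ∀ J, 0 ≤ E J) (t : ℝ) : 0 ≤ phiOf R E t :=
  le_ciInf fun J => le_max_of_le_right (hE0 J)

lemma phiOf_mono (hR0 : ∀ J, 0 ≤ R J) (hE0 : ∀ J, 0 ≤ E J) : Monotone (phiOf R E) := by
  intro a b hab
  refine le_ciInf fun J => (phiOf_le hE0 a J).trans ?_
  exact max_le_max (mul_le_mul_of_nonneg_left hab (hR0 J)) le_rfl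

lemma isComparisonFn_phiOf (hR0 : ∀ J, 0 ≤ R J) (hR1 : ∀ J, R J < 1) (hRle : ∀ J, R J ≤ 1)
    (hE0 : ∀ J, 0 ≤ E J) (hEs : ∀ t : ℝ, 0 < t → ∃ J, E J < t) :
    IsComparisonFn (phiOf R E) := by
  refine ⟨fun t _ => phiOf_nonneg hE0 t, (phiOf_mono hR0 hE0).monotoneOn _, ?_, ?_⟩
  · intro t ht
    obtain ⟨J, hJ⟩ := hEs t ht
    refine lt_of_le_of_lt (phiOf_le hE0 t J) (max_lt ?_ hJ)
    calc R J * t < 1 * t := by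
          exact mul_lt_mul_of_pos_right (hR1 J) ht
      _ = t := one_mul t
  · intro t _
    rw [Metric.continuousWithinAt_iff]
    intro ε hε
    have hφδ : phiOf R E t < phiOf R E t + ε / 2 := by linarith
    obtain ⟨J, hJ⟩ := exists_lt_of_ciInf_lt hφδ
    refine ⟨ε / 2, by linarith, fun s hs hdist => ?_⟩
    have hts : t ≤ s := hs
    have hst : s - t < ε / 2 := by
      rw [Real.dist_eq, abs_of_nonneg (by linarith)] at hdist
      linarith
    have h1 : phiOf R E s ≤ max (R J * s) (E J) := phiOf_le hE0 s J
    have h2 : R J * s ≤ R J * t + (s - t) := by nlinarith [hR0 J, hRle J]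
    have h3 : max (R J * s) (E J) ≤ max (R J * t) (E J) + (s - t) := by
      refine max_le (h2.trans ?_) ?_
      · linarith [le_max_left (R J * t) (E J)]
      · have : E J ≤ max (R J * t) (E J) := le_max_right _ _
        linarith
    have h5 : phiOf R E t ≤ phiOf R E s := phiOf_mono hR0 hE0 hts
    rw [Real.dist_eq, abs_of_nonneg (by linarith)]
    calc phiOf R E s - phiOf R E t ≤ max (R J * t) (E J) + (s - t) - phiOf R E t := by
          linarith [h1.trans h3]
      _ < ε := by linarith

end Phi

end MOAux

open MOAux NNReal

/-- **Theorem 3.4.** For a family having attractor `A`, there exist a metric `d` on `A`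
and a comparison function `φ` making every `f_i` a `φ`-contraction on `A`
(in particular each `f_i` maps `A` into `A`). -/
theorem metric_on_attractor {X I : Type*} [Finite I] [Nonempty I]
    (f : I → X → X) (hF : HasAttractor f) :
    ∃ (d : X → X → ℝ) (φ : ℝ → ℝ),
      IsComparisonFn φ ∧
      (∀ x ∈ AttractorSet f, d x x = 0) ∧
      (∀ x ∈ AttractorSet f, ∀ y ∈ AttractorSet f, d x y = 0 → x = y) ∧
      (∀ x ∈ AttractorSet f, ∀ y ∈ AttractorSet f, d x y = d y x) ∧
      (∀ x ∈ AttractorSet f, ∀ y ∈ AttractorSet f, ∀ z ∈ AttractorSet f,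
        d x z ≤ d x y + d y z) ∧
      (∀ x ∈ AttractorSet f, ∀ y ∈ AttractorSet f, 0 ≤ d x y) ∧
      (∀ i : I, Set.MapsTo (f i) (AttractorSet f) (AttractorSet f)) ∧
      (∀ i : I, ∀ x ∈ AttractorSet f, ∀ y ∈ AttractorSet f,
        d (f i x) (f i y) ≤ φ (d x y)) := by
  classical
  haveI : Nonempty (List I) := ⟨[]⟩
  choose g hg1 hg2 using fun n => MOAux.claimB3 hF n
  set ns : ℕ → ℕ := fun k => g^[k] 0 with hns
  have hns0 : ns 0 = 0 := rfl
  have hnssucc : ∀ k, ns (k + 1) = g (ns k) := fun k => Function.iterate_succ_apply' g k 0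
  have hnsmono : Monotone ns :=
    monotone_nat_of_le_succ fun k => by rw [hnssucc]; exact (hg1 _).le
  have hnsk : ∀ k, k ≤ ns k := by
    intro k
    induction k with
    | zero => exact Nat.zero_le _
    | succ k ih => rw [hnssucc]; exact Nat.succ_le_of_lt (lt_of_le_of_lt ih (hg1 _))
  set V : ℕ → Set (X × X) := fun k => URel f (ns k) with hV
  have hVanti : ∀ {j k : ℕ}, j ≤ k → V k ⊆ V j := fun h => uRel_anti f (hnsmono h)
  have hVsep : ∀ x y : X, (∀ k, (x, y) ∈ V k) → x = y := fun x y h =>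
    claimA hF fun n => uRel_anti f (hnsk n) (h n)
  have hVcomp : ∀ (k : ℕ) (a b c d : X), (a, b) ∈ V (k + 1) → (b, c) ∈ V (k + 1) →
      (c, d) ∈ V (k + 1) → (a, d) ∈ V k := by
    intro k a b c d h1 h2 h3
    simp only [hV, hnssucc] at h1 h2 h3
    exact hg2 (ns k) a b c d h1 h2 h3
  have hVdiagR : ∀ (a b : X) (k : ℕ), (a, b) ∈ V k → ∀ j, (b, b) ∈ V j := fun a b k h j =>
    uRel_diag (uRel_right_mem h) _
  have hVsymm : ∀ (k : ℕ) (a b : X), (a, b) ∈ V k → (b, a) ∈ V k := fun k a b h => uRel_symm h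
  set ρ : X → X → ℝ≥0 := rhoOf V with hρ
  have hρself : ∀ x, ρ x x = 0 := rhoOf_self V
  have hρcomm : ∀ x y, ρ x y = ρ y x := rhoOf_comm hVsymm
  have hρ4 : ∀ x₁ x₂ x₃ x₄ : X, ρ x₁ x₄ ≤ 2 * max (ρ x₁ x₂) (max (ρ x₂ x₃) (ρ x₃ x₄)) :=
    rhoOf_four hVanti hVsep hVcomp hVdiagR
  letI pmi : PseudoMetricSpace X := PseudoMetricSpace.ofPreNNDist ρ hρself hρcomm
  have hd_le : ∀ x y : X, dist x y ≤ (ρ x y : ℝ) := fun x y =>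
    PseudoMetricSpace.dist_ofPreNNDist_le ρ hρself hρcomm x y
  have hρ2d : ∀ x y : X, (ρ x y : ℝ) ≤ 2 * dist x y := fun x y =>
    PseudoMetricSpace.le_two_mul_dist_ofPreNNDist ρ hρself hρcomm hρ4 x y
  have hhalf : ((2 : ℝ≥0)⁻¹ : ℝ≥0) ≤ 1 := by
    rw [← NNReal.coe_le_coe]; push_cast; norm_num
  have hd01 : ∀ x y : X, dist x y ≤ 1 := fun x y =>
    (hd_le x y).trans (by exact_mod_cast rhoOf_le_one V x y)
  have hdecay : ∀ (k : ℕ) (w : List I), ns k ≤ w.length →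
      ∀ x ∈ AttractorSet f, ∀ y ∈ AttractorSet f,
        dist (WordMap f w x) (WordMap f w y) ≤ (2 : ℝ)⁻¹ ^ k := by
    intro k w hw x hx y hy
    have hU : (WordMap f w x, WordMap f w y) ∈ V k := uRel_word f hx hy w hw
    have h1 : ρ (WordMap f w x) (WordMap f w y) ≤ 2⁻¹ ^ (k + 1) :=
      rhoOf_le_of_mem hVanti hVsep hU
    have h2 : (2 : ℝ≥0)⁻¹ ^ (k + 1) ≤ 2⁻¹ ^ k :=
      pow_le_pow_right_of_le_one' hhalf (Nat.le_succ k)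
    calc dist (WordMap f w x) (WordMap f w y) ≤ (ρ (WordMap f w x) (WordMap f w y) : ℝ) :=
          hd_le _ _
      _ ≤ (((2 : ℝ≥0)⁻¹ ^ k : ℝ≥0) : ℝ) := by exact_mod_cast h1.trans h2
      _ = (2 : ℝ)⁻¹ ^ k := by push_cast; ring
  -- the rescaling weights
  set θ : ℕ → ℝ := fun j => 2 - (2 : ℝ)⁻¹ ^ j with hθ
  have hθ1 : ∀ j, 1 ≤ θ j := by
    intro j
    have : (2 : ℝ)⁻¹ ^ j ≤ 1 := pow_le_one₀ (by norm_num) (by norm_num)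
    simp only [hθ]; linarith
  have hθ2 : ∀ j, θ j ≤ 2 := by
    intro j
    have : (0 : ℝ) ≤ 2⁻¹ ^ j := by positivity
    simp only [hθ]; linarith
  have hθ0 : ∀ j, (0 : ℝ) ≤ θ j := fun j => le_trans zero_le_one (hθ1 j)
  set D : X → X → ℝ := fun x y => ⨆ w : List I, θ w.length * dist (WordMap f w x) (WordMap f w y)
    with hD
  have hbddD : ∀ x y : X, BddAbove (Set.range fun w : List I =>
      θ w.length * dist (WordMap f w x) (WordMap f w y)) := by
    intro x y
    refine ⟨2, ?_⟩
    rintro v ⟨w, rfl⟩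
    calc θ w.length * dist (WordMap f w x) (WordMap f w y) ≤ 2 * 1 :=
          mul_le_mul (hθ2 _) (hd01 _ _) dist_nonneg (by norm_num)
      _ = 2 := by norm_num
  have hDle : ∀ (x y : X) (w : List I),
      θ w.length * dist (WordMap f w x) (WordMap f w y) ≤ D x y := fun x y w =>
    le_ciSup (hbddD x y) w
  have hD0 : ∀ x : X, D x x = 0 := by
    intro x
    have he : (fun w : List I => θ w.length * dist (WordMap f w x) (WordMap f w x)) =
        fun _ => (0 : ℝ) := funext fun w => by rw [dist_self, mul_zero]
    calc D x x = ⨆ _ : List I, (0 : ℝ) := by rw [hD]; exact congrArg _ he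
      _ = 0 := ciSup_const
  have hDsymm : ∀ x y : X, D x y = D y x := by
    intro x y
    simp only [hD]
    exact iSup_congr fun w => by rw [dist_comm]
  have hDtri : ∀ x y z : X, D x z ≤ D x y + D y z := by
    intro x y z
    refine ciSup_le fun w => ?_
    calc θ w.length * dist (WordMap f w x) (WordMap f w z)
        ≤ θ w.length * (dist (WordMap f w x) (WordMap f w y) +
            dist (WordMap f w y) (WordMap f w z)) :=
          mul_le_mul_of_nonneg_left (dist_triangle _ _ _) (hθ0 _)
      _ = θ w.length * dist (WordMap f w x) (WordMap f w y) +
            θ w.length * dist (WordMap f w y) (WordMap f w z) := mul_add _ _ _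
      _ ≤ D x y + D y z := add_le_add (hDle x y w) (hDle y z w)
  have hDnonneg : ∀ x y : X, 0 ≤ D x y := fun x y =>
    le_trans (mul_nonneg (hθ0 0) dist_nonneg) (hDle x y [])
  have hDsep : ∀ x y : X, D x y = 0 → x = y := by
    intro x y h0
    have h1 : θ 0 * dist x y ≤ D x y := hDle x y []
    have hθ00 : θ 0 = 1 := by norm_num [hθ]
    rw [hθ00, one_mul, h0] at h1
    have h2 : dist x y = 0 := le_antisymm h1 dist_nonneg
    have h3 : (ρ x y : ℝ) ≤ 0 := by rw [← mul_zero 2, ← h2]; exact hρ2d x y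
    have h4 : ρ x y = 0 := le_antisymm (by exact_mod_cast h3) zero_le
    exact (rhoOf_eq_zero_iff V).1 h4
  -- κ, E, R
  set κ : ℕ → ℕ := fun J => Nat.findGreatest (fun k => ns k ≤ J) J with hκ
  have hκ1 : ∀ J, ns (κ J) ≤ J := by
    intro J
    exact Nat.findGreatest_spec (P := fun k => ns k ≤ J) (Nat.zero_le J)
      (show ns 0 ≤ J by rw [hns0]; exact Nat.zero_le J)
  have hκ2 : ∀ k J, k ≤ J → ns k ≤ J → k ≤ κ J := fun k J h1 h2 =>
    Nat.le_findGreatest h1 h2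
  set E : ℕ → ℝ := fun J => 2 * (2 : ℝ)⁻¹ ^ (κ J) with hE
  set R : ℕ → ℝ := fun J => 1 - (2 : ℝ)⁻¹ ^ (J + 2) with hR
  have hR0 : ∀ J, 0 ≤ R J := by
    intro J
    have : (2 : ℝ)⁻¹ ^ (J + 2) ≤ 1 := pow_le_one₀ (by norm_num) (by norm_num)
    simp only [hR]; linarith
  have hR1 : ∀ J, R J < 1 := by
    intro J
    have : (0 : ℝ) < 2⁻¹ ^ (J + 2) := by positivity
    simp only [hR]; linarith
  have hRle : ∀ J, R J ≤ 1 := fun J => (hR1 J).le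
  have hE0 : ∀ J, 0 ≤ E J := by
    intro J
    have : (0 : ℝ) ≤ 2⁻¹ ^ (κ J) := by positivity
    simp only [hE]; linarith
  have hEs : ∀ t : ℝ, 0 < t → ∃ J, E J < t := by
    intro t ht
    obtain ⟨k, hk⟩ := exists_pow_lt_of_lt_one (show (0 : ℝ) < t / 2 by linarith)
      (show (2 : ℝ)⁻¹ < 1 by norm_num)
    refine ⟨max k (ns k), ?_⟩
    have hκk : k ≤ κ (max k (ns k)) := hκ2 k _ (le_max_left _ _) (le_max_right _ _)
    have hpow : (2 : ℝ)⁻¹ ^ (κ (max k (ns k))) ≤ 2⁻¹ ^ k :=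
      pow_le_pow_of_le_one (by norm_num) (by norm_num) hκk
    calc E (max k (ns k)) = 2 * (2 : ℝ)⁻¹ ^ (κ (max k (ns k))) := by rw [hE]
      _ ≤ 2 * 2⁻¹ ^ k := by linarith
      _ < t := by linarith
  have hθR : ∀ j J : ℕ, j ≤ J → θ j ≤ R J * θ (j + 1) := by
    intro j J hjJ
    have e1 : θ (j + 1) ≤ 2 := hθ2 _
    have e1' : 1 ≤ θ (j + 1) := hθ1 _
    have e2 : (0 : ℝ) ≤ 2⁻¹ ^ (J + 2) := by positivity
    have e3 : (2 : ℝ)⁻¹ ^ (J + 2) ≤ 2⁻¹ ^ (j + 2) :=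
      pow_le_pow_of_le_one (by norm_num) (by norm_num) (by omega)
    have e4 : (2 : ℝ)⁻¹ ^ j = 2 * 2⁻¹ ^ (j + 1) := by rw [pow_succ]; ring
    have e5 : (2 : ℝ)⁻¹ ^ (j + 2) = 2⁻¹ ^ (j + 1) * 2⁻¹ := by rw [pow_succ]
    have e6 : (0 : ℝ) ≤ 2⁻¹ ^ (j + 1) := by positivity
    show 2 - (2 : ℝ)⁻¹ ^ j ≤ (1 - (2 : ℝ)⁻¹ ^ (J + 2)) * (2 - (2 : ℝ)⁻¹ ^ (j + 1))
    nlinarith [mul_nonneg e2 e6, e3, e4, e5]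
  have hWcomp : ∀ (i : I) (w : List I) (x : X), WordMap f w (f i x) = WordMap f (w ++ [i]) x := by
    intro i w x
    rw [wordMap_append]
    rfl
  have hlen : ∀ (w : List I) (i : I), (w ++ [i]).length = w.length + 1 := by simp
  have hcore : ∀ i : I, ∀ x ∈ AttractorSet f, ∀ y ∈ AttractorSet f, ∀ J : ℕ,
      D (f i x) (f i y) ≤ max (R J * D x y) (E J) := by
    intro i x hx y hy J
    refine ciSup_le fun w => ?_
    rw [hWcomp i w x, hWcomp i w y]
    rcases le_or_gt w.length J with hwJ | hwJ
    · refine le_max_of_le_left ?_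
      have hDterm : θ (w.length + 1) * dist (WordMap f (w ++ [i]) x) (WordMap f (w ++ [i]) y)
          ≤ D x y := by
        have := hDle x y (w ++ [i])
        rwa [hlen] at this
      calc θ w.length * dist (WordMap f (w ++ [i]) x) (WordMap f (w ++ [i]) y)
          ≤ (R J * θ (w.length + 1)) * dist (WordMap f (w ++ [i]) x) (WordMap f (w ++ [i]) y) :=
            mul_le_mul_of_nonneg_right (hθR w.length J hwJ) dist_nonneg
        _ = R J * (θ (w.length + 1) * dist (WordMap f (w ++ [i]) x) (WordMap f (w ++ [i]) y)) :=
            by ring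
        _ ≤ R J * D x y := mul_le_mul_of_nonneg_left hDterm (hR0 J)
    · refine le_max_of_le_right ?_
      have hd : dist (WordMap f (w ++ [i]) x) (WordMap f (w ++ [i]) y) ≤ (2 : ℝ)⁻¹ ^ κ J := by
        refine hdecay (κ J) (w ++ [i]) ?_ x hx y hy
        rw [hlen]
        exact le_trans (hκ1 J) (by omega)
      calc θ w.length * dist (WordMap f (w ++ [i]) x) (WordMap f (w ++ [i]) y)
          ≤ 2 * dist (WordMap f (w ++ [i]) x) (WordMap f (w ++ [i]) y) :=
            mul_le_mul_of_nonneg_right (hθ2 _) dist_nonneg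
        _ ≤ 2 * (2 : ℝ)⁻¹ ^ κ J := by linarith
        _ = E J := by rw [hE]
  refine ⟨D, phiOf R E, isComparisonFn_phiOf hR0 hR1 hRle hE0 hEs,
    fun x _ => hD0 x, fun x _ y _ h => hDsep x y h, fun x _ y _ => hDsymm x y,
    fun x _ y _ z _ => hDtri x y z, fun x _ y _ => hDnonneg x y,
    mapsTo_attractor f, ?_⟩
  intro i x hx y hy
  show D (f i x) (f i y) ≤ ⨅ J : ℕ, max (R J * D x y) (E J)
  exact le_ciInf fun J => hcore i x hx y hy J
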